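/- Let R be a partially ordered set, let J be a type, let J₁ ⊆ J₂ be subsets of J, and let r, rᵒᵖᵗ : J → R satisfy rᵒᵖᵗ(j) ≤ r(j) for all j ∈ J. Assume the image sets r(J₁) and rᵒᵖᵗ(J₂) are finite. Then the upper closure of the minimal elements of r(J₁) is contained in the upper closure of the minimal elements of rᵒᵖᵗ(J₂). (Lower approximation of system-level resources: the upward closure of the true induced antichain is contained in the upward closure of the propagated optimistic antichain.) -/

import Mathlib

/-- The minimal elements of a set `S` in a poset:
`min S = { x ∈ S | there is no y ∈ S with y < x }`. -/
def minimalsOf {R : Type*} [PartialOrder R] (S : Set R) : Set R :=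
  {x ∈ S | ¬ ∃ y ∈ S, y < x}

/-- Lower approximation of system-level resources: the upward closure of the
true induced antichain is contained in the upward closure of the propagated
optimistic antichain. -/
theorem lower_approx_system_resources {R J : Type*} [PartialOrder R]
    (J₁ J₂ : Set J) (hJ : J₁ ⊆ J₂)
    (r ropt : J → R) (h : ∀ j : J, ropt j ≤ r j)
    (h₁ : (r '' J₁).Finite) (h₂ : (ropt '' J₂).Finite) :
    (upperClosure (minimalsOf (r '' J₁)) : Set R) ⊆
      upperClosure (minimalsOf (ropt '' J₂)) := by
  intro x hx
  obtain ⟨m, hm, hmx⟩ := hx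
  obtain ⟨⟨j, hj, rfl⟩, -⟩ := hm
  have hmem : ropt j ∈ ropt '' J₂ := ⟨j, hJ hj, rfl⟩
  obtain ⟨z, hzle, ⟨hz, hzmin⟩⟩ := h₂.exists_le_minimal hmem
  exact ⟨z, ⟨hz, fun ⟨y, hy, hyz⟩ => hyz.not_ge (hzmin hy hyz.le)⟩,
    hzle.trans ((h j).trans hmx)⟩
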